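/- Fix k ≥ 1 and consider the collection M_k of matryoshka boxes of degree k in ω^ω, i.e., sets of the form M = {α ∈ ω^ω : CB(α) = j and α ≤* δ} for some j < k and δ < ω^ω with CB(δ) = k−1. The relation M ≺ N iff (rank(M) < rank(N)) or (rank(M) = rank(N) and sup(M) < inf(N)) is a strict well-order on M_k of order type ω^ω · k. -/

import Mathlib

open Ordinal Set

/-- Cantor–Bendixson rank of an ordinal: the exponent of the last term of its
Cantor normal form, with `CB 0 = 0`. -/
noncomputable def CB (o : Ordinal) : Ordinal :=
  ((Ordinal.CNF Ordinal.omega0 o).getLast?.map Prod.fst).getD 0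

/-- `X` is a closed copy of the ordinal `β`: there is an order isomorphism onto
`Iio β` (with the topology induced from the order topology on `Ordinal`) which
is a homeomorphism. -/
def IsClosedCopy (X : Set Ordinal) (β : Ordinal) : Prop :=
  ∃ f : X ≃o (Set.Iio β), Continuous f ∧ Continuous f.symm

/-- `X` is homogeneous of color `i` for the pair coloring `c`. -/
def Homog (c : Ordinal → Ordinal → Fin 2) (X : Set Ordinal) (i : Fin 2) : Prop :=
  ∀ x ∈ X, ∀ y ∈ X, x < y → c x y = i

/-- The closed partition relation `γ →_cl (α,β)²`. -/
def ClPartition (γ α β : Ordinal) : Prop :=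
  ∀ c : Ordinal → Ordinal → Fin 2,
    (∃ X ⊆ Set.Iio γ, IsClosedCopy X α ∧ Homog c X 0) ∨
    (∃ X ⊆ Set.Iio γ, IsClosedCopy X β ∧ Homog c X 1)

/-- `X` is an order-isomorphic copy of the ordinal `β`. -/
def IsOrderCopy (X : Set Ordinal) (β : Ordinal) : Prop :=
  Nonempty (X ≃o Set.Iio β)

/-- The classical partition relation `γ → (α,β)²`. -/
def ClassPartition (γ α β : Ordinal) : Prop :=
  ∀ c : Ordinal → Ordinal → Fin 2,
    (∃ X ⊆ Set.Iio γ, IsOrderCopy X α ∧ Homog c X 0) ∨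
    (∃ X ⊆ Set.Iio γ, IsOrderCopy X β ∧ Homog c X 1)

/-- The ordinal Ramsey number `R(α,β)`: least `γ` with `γ → (α,β)²`. -/
noncomputable def Rord (α β : Ordinal) : Ordinal := sInf {γ | ClassPartition γ α β}

/-- The closed Ramsey number `R^cl(α,β)`: least `γ` with `γ →_cl (α,β)²`. -/
noncomputable def Rcl (α β : Ordinal) : Ordinal := sInf {γ | ClPartition γ α β}

/-- The first uncountable ordinal. -/
noncomputable def omega1 : Ordinal := (Cardinal.aleph 1).ord

/-- One step of the relation `<*`: `α = β + ω^δ` for some `δ > CB β`. -/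
def stepRel (β α : Ordinal) : Prop := ∃ δ : Ordinal, CB β < δ ∧ α = β + Ordinal.omega0 ^ δ

/-- The strict partial order `<*` generated by `stepRel`. -/
def ltStar : Ordinal → Ordinal → Prop := Relation.TransGen stepRel

/-- The reflexive partial order `≤*`. -/
def leStar : Ordinal → Ordinal → Prop := Relation.ReflTransGen stepRel

/-- `T(α) = {β : β <* α} ∪ {α}`, the subtree below the vertex `α`. -/
def Tset (α : Ordinal) : Set Ordinal := {β | ltStar β α} ∪ {α}

/-- `M` is a matryoshka box of degree `k`: for some rank `j < k` and some
`δ < ω^ω` with `CB δ = k − 1`, `M = {α ∈ ω^ω : CB α = j ∧ α ≤* δ}`. -/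
def IsMatBox (k : ℕ) (M : Set Ordinal) : Prop :=
  ∃ j : ℕ, j < k ∧ ∃ δ : Ordinal, δ < Ordinal.omega0 ^ Ordinal.omega0 ∧
    CB δ = ((k : ℕ) - 1 : ℕ) ∧
    M = {a | a < Ordinal.omega0 ^ Ordinal.omega0 ∧ CB a = j ∧ leStar a δ}

/-- The rank of a matryoshka box: the common `CB`-value of its elements. -/
noncomputable def boxRank (M : Set Ordinal) : Ordinal := sSup (CB '' M)

/-- The order `≺` on matryoshka boxes: compare ranks first, then positions. -/
noncomputable def boxPrec (M N : Set Ordinal) : Prop :=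
  boxRank M < boxRank N ∨ (boxRank M = boxRank N ∧ sSup M < sInf N)

lemma CB_zero : CB 0 = 0 := by simp [CB]

lemma CB_rec {o : Ordinal} (h : o ≠ 0) :
    CB o = if o % omega0 ^ log omega0 o = 0 then log omega0 o
      else CB (o % omega0 ^ log omega0 o) := by
  rw [CB, CNF.ne_zero h]
  split_ifs with h2
  · simp [h2]
  · have : CNF omega0 (o % omega0 ^ log omega0 o) ≠ [] := by
      simp [CNF.ne_zero h2]
    obtain ⟨x, l, hl⟩ := List.exists_cons_of_ne_nil this
    rw [CB, hl, List.getLast?_cons_cons]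

lemma succ_mod_omega0_ne_zero (γ : Ordinal) : (γ + 1) % omega0 ≠ 0 := by
  conv_lhs => rw [← Ordinal.div_add_mod γ omega0, add_assoc, Ordinal.mul_add_mod_self]
  have h1 : γ % omega0 + 1 < omega0 := isSuccLimit_omega0.add_one_lt (Ordinal.mod_lt γ omega0_ne_zero)
  rw [Ordinal.mod_eq_of_lt h1]
  exact (Ordinal.succ_ne_zero _)

lemma not_omega0_dvd_succ (γ : Ordinal) : ¬ (omega0 ∣ γ + 1) := by
  intro ⟨t, ht⟩
  apply succ_mod_omega0_ne_zero γ
  rw [ht]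
  simpa using Ordinal.mul_add_mod_self omega0 t 0

lemma opow_mul_succ_ne {e e' γ γ' : Ordinal} (hlt : e < e') :
    omega0 ^ e * (γ + 1) ≠ omega0 ^ e' * (γ' + 1) := by
  intro h
  have hd : (e + 1) + (e' - (e + 1)) = e' :=
    Ordinal.add_sub_cancel_of_le (Order.add_one_le_iff.mpr hlt)
  have h1 : omega0 ^ e' = omega0 ^ e * (omega0 * omega0 ^ (e' - (e + 1))) := by
    conv_lhs => rw [← hd]
    rw [add_assoc, opow_add, opow_add, opow_one]
  rw [h1, mul_assoc] at h
  rw [mul_left_cancel_iff_of_pos (opow_pos _ omega0_pos)] at h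
  rw [mul_assoc] at h
  exact not_omega0_dvd_succ _ ⟨_, h⟩

lemma opow_mul_succ_inj {e e' γ γ' : Ordinal}
    (h : omega0 ^ e * (γ + 1) = omega0 ^ e' * (γ' + 1)) : e = e' := by
  by_contra hne
  rcases Ne.lt_or_gt hne with hlt | hlt
  · exact opow_mul_succ_ne hlt h
  · exact opow_mul_succ_ne hlt h.symm

lemma succ_pos' (γ : Ordinal) : (0:Ordinal) < γ + 1 :=
  lt_of_le_of_lt zero_le (lt_add_one γ)

lemma CB_exists {o : Ordinal} (h : o ≠ 0) : ∃ γ, o = omega0 ^ (CB o) * (γ + 1) := by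
  induction o using Ordinal.induction with
  | _ o IH =>
  have hL := Ordinal.div_add_mod o (omega0 ^ log omega0 o)
  rw [CB_rec h]
  split_ifs with h2
  · rw [h2, add_zero] at hL
    have hq : o / omega0 ^ log omega0 o < omega0 := div_opow_log_lt o one_lt_omega0
    obtain ⟨n, hn⟩ := lt_omega0.1 hq
    have hn0 : n ≠ 0 := by
      rintro rfl
      have := div_opow_log_pos omega0 h
      rw [hn] at this; simp at this
    refine ⟨(n - 1 : ℕ), ?_⟩
    conv_lhs => rw [← hL, hn]
    congr 1
    have h3 : ((n - 1 : ℕ) : Ordinal) + 1 = ((n - 1 + 1 : ℕ) : Ordinal) := by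
      push_cast; ring
    rw [h3, Nat.sub_add_cancel (Nat.one_le_iff_ne_zero.2 hn0)]
  · have hrlt : o % omega0 ^ log omega0 o < o :=
      lt_of_lt_of_le (Ordinal.mod_lt o (opow_ne_zero _ omega0_ne_zero))
        (opow_log_le_self _ h)
    obtain ⟨γ, hγ⟩ := IH _ hrlt h2
    set c := CB (o % omega0 ^ log omega0 o) with hc
    have hcL : c < log omega0 o := by
      have h1 : omega0 ^ c ≤ o % omega0 ^ log omega0 o := by
        rw [hγ]
        simpa using (mul_le_mul_iff_right₀ (opow_pos c omega0_pos)).2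
          (Order.one_le_iff_pos.2 (succ_pos' γ))
      have h2' : omega0 ^ c < omega0 ^ log omega0 o :=
        lt_of_le_of_lt h1 (Ordinal.mod_lt o (opow_ne_zero _ omega0_ne_zero))
      exact (opow_lt_opow_iff_right one_lt_omega0).1 h2'
    set q := o / omega0 ^ log omega0 o with hqdef
    refine ⟨omega0 ^ (log omega0 o - c) * q + γ, ?_⟩
    have hsplit : omega0 ^ log omega0 o = omega0 ^ c * omega0 ^ (log omega0 o - c) := by
      rw [← opow_add, Ordinal.add_sub_cancel_of_le hcL.le]
    conv_lhs => rw [← hL, hγ]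
    rw [hsplit, mul_assoc, ← mul_add, ← add_assoc]

lemma CB_opow_mul_succ (e γ : Ordinal) : CB (omega0 ^ e * (γ + 1)) = e := by
  have h : omega0 ^ e * (γ + 1) ≠ 0 := (mul_pos (opow_pos e omega0_pos) (succ_pos' γ)).ne'
  obtain ⟨γ', hγ'⟩ := CB_exists h
  exact (opow_mul_succ_inj hγ'.symm)

lemma add_opow_eq (b e : Ordinal) :
    b + omega0 ^ e = omega0 ^ e * (b / omega0 ^ e + 1) := by
  conv_lhs => rw [← Ordinal.div_add_mod b (omega0 ^ e)]
  rw [add_assoc, mul_add, mul_one]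
  congr 1
  exact Ordinal.add_absorp (Ordinal.mod_lt b (opow_ne_zero _ omega0_ne_zero)) le_rfl

lemma CB_add_opow (b e : Ordinal) : CB (b + omega0 ^ e) = e := by
  rw [add_opow_eq, CB_opow_mul_succ]


lemma CB_mul {γ : Ordinal} (c : Ordinal) (h : γ ≠ 0) : CB (omega0 ^ c * γ) = c + CB γ := by
  obtain ⟨t, ht⟩ := CB_exists h
  conv_lhs => rw [ht]
  rw [← mul_assoc, ← opow_add, CB_opow_mul_succ]

lemma le_CB_mul {γ : Ordinal} (c : Ordinal) (h : γ ≠ 0) : c ≤ CB (omega0 ^ c * γ) := by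
  rw [CB_mul c h]; exact le_self_add

lemma stepRel_lt {b a : Ordinal} (h : stepRel b a) : b < a := by
  obtain ⟨δ, _, rfl⟩ := h
  exact lt_add_of_pos_right b (opow_pos δ omega0_pos)

lemma leStar_iff {a δ : Ordinal} :
    leStar a δ ↔ a = δ ∨ (CB a < CB δ ∧ a + omega0 ^ (CB δ) = δ) := by
  constructor
  · intro h
    induction h with
    | refl => exact Or.inl rfl
    | tail hab hbc ih =>
      rename_i b c
      obtain ⟨e, he, rfl⟩ := hbc
      rw [CB_add_opow]
      rcases ih with rfl | ⟨h1, h2⟩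
      · exact Or.inr ⟨he, rfl⟩
      · refine Or.inr ⟨h1.trans he, ?_⟩
        have habs : omega0 ^ CB b + omega0 ^ e = omega0 ^ e :=
          Ordinal.add_absorp ((opow_lt_opow_iff_right one_lt_omega0).2 he) le_rfl
        conv_rhs => rw [← h2, add_assoc, habs]
  · rintro (rfl | ⟨h1, h2⟩)
    · exact Relation.ReflTransGen.refl
    · exact Relation.ReflTransGen.single ⟨CB δ, h1, h2.symm⟩

def box (j : ℕ) (δ : Ordinal) : Set Ordinal :=
  {a | a < Ordinal.omega0 ^ Ordinal.omega0 ∧ CB a = j ∧ leStar a δ}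

lemma box_le {j : ℕ} {δ a : Ordinal} (h : a ∈ box j δ) : a ≤ δ := by
  rcases leStar_iff.1 h.2.2 with rfl | ⟨_, h2⟩
  · exact le_rfl
  · exact h2 ▸ le_self_add

lemma box_singleton {j : ℕ} {δ c : Ordinal} (hδW : δ < omega0 ^ omega0)
    (hCB : CB δ = c) (hjc : (j : Ordinal) = c) : box j δ = {δ} := by
  ext a
  simp only [box, Set.mem_setOf_eq, Set.mem_singleton_iff]
  constructor
  · rintro ⟨h1, h2, h3⟩
    rcases leStar_iff.1 h3 with rfl | ⟨h4, _⟩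
    · rfl
    · rw [h2, hjc, hCB] at h4; exact absurd h4 (lt_irrefl c)
  · rintro rfl
    exact ⟨hδW, by rw [hCB, hjc], Relation.ReflTransGen.refl⟩

lemma box_elt {j : ℕ} {c γ : Ordinal} (hjc : (j : Ordinal) < c)
    (hW : omega0 ^ c * (γ + 1) < omega0 ^ omega0) {x : Ordinal}
    (hbx : omega0 ^ c * γ ≤ x) (hxδ : x < omega0 ^ c * (γ + 1)) :
    x + omega0 ^ (j : Ordinal) ∈ box j (omega0 ^ c * (γ + 1)) := by
  have hρ : x - omega0 ^ c * γ < omega0 ^ c := by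
    rw [Ordinal.sub_lt_of_le hbx]
    rwa [← mul_add_one] 
  have hx : omega0 ^ c * γ + (x - omega0 ^ c * γ) = x := Ordinal.add_sub_cancel_of_le hbx
  have hωj : omega0 ^ (j : Ordinal) < omega0 ^ c :=
    (opow_lt_opow_iff_right one_lt_omega0).2 hjc
  have hlt : x + omega0 ^ (j : Ordinal) < omega0 ^ c * (γ + 1) := by
    rw [← hx, add_assoc, mul_add_one]
    exact add_lt_add_right (principal_add_omega0_opow c hρ hωj) _
  have hstep : (x + omega0 ^ (j : Ordinal)) + omega0 ^ c = omega0 ^ c * (γ + 1) := by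
    rw [add_assoc, Ordinal.add_absorp hωj le_rfl, ← hx, add_assoc,
      Ordinal.add_absorp hρ le_rfl, mul_add_one]
  refine ⟨hlt.trans hW, CB_add_opow x j, leStar_iff.2 (Or.inr ?_)⟩
  rw [CB_add_opow, CB_opow_mul_succ]
  exact ⟨hjc, hstep⟩

lemma box_gt {j : ℕ} {c γ : Ordinal} (hγ : 0 < γ) {a : Ordinal}
    (ha : a ∈ box j (omega0 ^ c * (γ + 1))) : omega0 ^ c * γ < a := by
  have hbδ : omega0 ^ c * γ < omega0 ^ c * (γ + 1) :=
    (mul_lt_mul_iff_right₀ (opow_pos c omega0_pos)).2 (lt_add_one γ)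
  rcases leStar_iff.1 ha.2.2 with rfl | ⟨h1, h2⟩
  · exact hbδ
  · rw [CB_opow_mul_succ] at h1 h2
    rcases lt_or_ge (omega0 ^ c * γ) a with h | h
    · exact h
    · rcases h.lt_or_eq with h | h
      · exfalso
        have hdiv : a / omega0 ^ c < γ := (Ordinal.div_lt (opow_ne_zero _ omega0_ne_zero)).2 h
        have : a + omega0 ^ c < omega0 ^ c * (γ + 1) := by
          rw [add_opow_eq]
          exact lt_of_le_of_lt
            ((mul_le_mul_iff_right₀ (opow_pos c omega0_pos)).2
              (Order.add_one_le_iff.2 hdiv))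
            hbδ
        rw [h2] at this; exact lt_irrefl _ this
      · exfalso
        have hCBa : c ≤ CB a := by
          rw [h]; exact le_CB_mul c hγ.ne'
        exact absurd (lt_of_le_of_lt hCBa h1) (lt_irrefl c)

lemma box_mem_self {j : ℕ} {δ c : Ordinal} (hδW : δ < omega0 ^ omega0)
    (hCB : CB δ = c) (hjc : (j : Ordinal) = c) : δ ∈ box j δ :=
  ⟨hδW, by rw [hCB, hjc], Relation.ReflTransGen.refl⟩

lemma box_nonempty {j : ℕ} {c γ : Ordinal} (hjc : (j : Ordinal) ≤ c)
    (hW : omega0 ^ c * (γ + 1) < omega0 ^ omega0) :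
    (box j (omega0 ^ c * (γ + 1))).Nonempty := by
  rcases hjc.lt_or_eq with h | h
  · exact ⟨_, box_elt h hW le_rfl
      ((mul_lt_mul_iff_right₀ (opow_pos c omega0_pos)).2 (lt_add_one γ))⟩
  · exact ⟨_, box_mem_self hW (CB_opow_mul_succ c γ) h⟩

lemma box_bddAbove {j : ℕ} {δ : Ordinal} : BddAbove (box j δ) :=
  ⟨δ, fun _ ha => box_le ha⟩

lemma box_sSup {j : ℕ} {c γ : Ordinal} (hjc : (j : Ordinal) ≤ c)
    (hW : omega0 ^ c * (γ + 1) < omega0 ^ omega0) :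
    sSup (box j (omega0 ^ c * (γ + 1))) = omega0 ^ c * (γ + 1) := by
  refine le_antisymm (csSup_le (box_nonempty hjc hW) fun a ha => box_le ha) ?_
  rcases hjc.lt_or_eq with h | h
  · by_contra hlt
    push_neg at hlt
    set δ := omega0 ^ c * (γ + 1)
    have hbδ : omega0 ^ c * γ < δ :=
      (mul_lt_mul_iff_right₀ (opow_pos c omega0_pos)).2 (lt_add_one γ)
    set x := max (omega0 ^ c * γ) (sSup (box j δ)) with hxdef
    have hx1 : omega0 ^ c * γ ≤ x := le_max_left _ _
    have hx2 : x < δ := max_lt hbδ hlt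
    have hmem := box_elt h hW hx1 hx2
    have h3 : x + omega0 ^ (j : Ordinal) ≤ sSup (box j δ) := le_csSup box_bddAbove hmem
    have h4 : sSup (box j δ) ≤ x := le_max_right _ _
    have : x < x := lt_of_lt_of_le
      (lt_add_of_pos_right x (opow_pos _ omega0_pos)) (h3.trans h4)
    exact lt_irrefl x this
  · exact le_csSup box_bddAbove (box_mem_self hW (CB_opow_mul_succ c γ) h)

lemma box_rank {j : ℕ} {δ : Ordinal} (h : (box j δ).Nonempty) :
    sSup (CB '' box j δ) = (j : Ordinal) := by
  have : CB '' box j δ = {(j : Ordinal)} := by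
    apply Set.eq_singleton_iff_nonempty_unique_mem.2
    exact ⟨h.image CB, by rintro _ ⟨a, ha, rfl⟩; exact ha.2.1⟩
  rw [this, csSup_singleton]

lemma box_sup_lt_inf {j : ℕ} {c γ γ' : Ordinal} (hjc : (j : Ordinal) ≤ c)
    (hγγ' : γ < γ') (hW' : omega0 ^ c * (γ' + 1) < omega0 ^ omega0)
    (hW : omega0 ^ c * (γ + 1) < omega0 ^ omega0) :
    sSup (box j (omega0 ^ c * (γ + 1))) < sInf (box j (omega0 ^ c * (γ' + 1))) := by
  rw [box_sSup hjc hW]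
  have hne' := box_nonempty hjc hW'
  have hinf : sInf (box j (omega0 ^ c * (γ' + 1))) ∈ box j (omega0 ^ c * (γ' + 1)) :=
    csInf_mem hne'
  have h1 : omega0 ^ c * γ' < sInf (box j (omega0 ^ c * (γ' + 1))) :=
    box_gt (lt_of_le_of_lt zero_le hγγ') hinf
  exact lt_of_le_of_lt
    ((mul_le_mul_iff_right₀ (opow_pos c omega0_pos)).2 (Order.add_one_le_iff.2 hγγ')) h1

noncomputable def iotaF (k : ℕ) (γ : Ordinal) : Ordinal :=
  if k = 1 then (if γ < omega0 then γ else γ + 1)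
  else omega0 ^ ((k - 1 : ℕ) : Ordinal) * (γ + 1)

noncomputable def posF (k : ℕ) (δ : Ordinal) : Ordinal :=
  if k = 1 then (if δ < omega0 then δ else Ordinal.pred δ)
  else Ordinal.pred (δ / omega0 ^ ((k - 1 : ℕ) : Ordinal))

lemma CB_succ' (γ : Ordinal) : CB (γ + 1) = 0 := by
  have := CB_opow_mul_succ 0 γ
  rwa [opow_zero, one_mul] at this

lemma CB_nat (n : ℕ) : CB (n : Ordinal) = 0 := by
  cases n with
  | zero => exact CB_zero
  | succ m =>
    have : ((m + 1 : ℕ) : Ordinal) = (m : Ordinal) + 1 := by push_cast; ring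
    rw [this, CB_succ']

lemma omega0_opow_omega0_limit : Order.IsSuccLimit (omega0 ^ omega0 : Ordinal) :=
  isSuccLimit_opow one_lt_omega0 isSuccLimit_omega0

lemma iotaF_lt_W {k : ℕ} {γ : Ordinal} (hγ : γ < omega0 ^ omega0) :
    iotaF k γ < omega0 ^ omega0 := by
  unfold iotaF
  split_ifs with h1 h2
  · exact hγ
  · exact omega0_opow_omega0_limit.add_one_lt hγ
  · have h3 : γ + 1 < omega0 ^ omega0 := omega0_opow_omega0_limit.add_one_lt hγ
    calc omega0 ^ ((k - 1 : ℕ) : Ordinal) * (γ + 1)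
        < omega0 ^ ((k - 1 : ℕ) : Ordinal) * (omega0 ^ omega0) :=
          (mul_lt_mul_iff_right₀ (opow_pos _ omega0_pos)).2 h3
      _ = omega0 ^ (((k - 1 : ℕ) : Ordinal) + omega0) := (opow_add _ _ _).symm
      _ = omega0 ^ omega0 := by rw [Ordinal.add_omega0 (nat_lt_omega0 _)]

lemma CB_iotaF {k : ℕ} (γ : Ordinal) : CB (iotaF k γ) = ((k - 1 : ℕ) : Ordinal) := by
  unfold iotaF
  split_ifs with h1 h2
  · subst h1
    simp only [Nat.sub_self, Nat.cast_zero]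
    obtain ⟨n, rfl⟩ := lt_omega0.1 h2
    exact CB_nat n
  · subst h1
    simp only [Nat.sub_self, Nat.cast_zero]
    exact CB_succ' γ
  · exact CB_opow_mul_succ _ _

lemma succ_lt_succ' {γ γ' : Ordinal} (h : γ < γ') : γ + 1 < γ' + 1 := by
  rw [Ordinal.add_one_eq_succ, Ordinal.add_one_eq_succ]
  exact Order.succ_lt_succ h

lemma iotaF_strictMono {k : ℕ} {γ γ' : Ordinal} (h : γ < γ') :
    iotaF k γ < iotaF k γ' := by
  unfold iotaF
  by_cases h1 : k = 1
  · rw [if_pos h1, if_pos h1]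
    split_ifs with h2 h3 h3
    · exact h
    · exact h.trans (lt_add_one γ')
    · exact absurd (h.trans h3) h2
    · exact succ_lt_succ' h
  · rw [if_neg h1, if_neg h1]
    exact (mul_lt_mul_iff_right₀ (opow_pos _ omega0_pos)).2 (succ_lt_succ' h)

lemma posF_iotaF {k : ℕ} (γ : Ordinal) : posF k (iotaF k γ) = γ := by
  unfold iotaF posF
  by_cases h1 : k = 1
  · rw [if_pos h1, if_pos h1]
    split_ifs with h2 h3
    · rfl
    · exact absurd ((lt_add_one γ).trans h3) h2
    · rw [Ordinal.add_one_eq_succ, Ordinal.pred_succ]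
  · rw [if_neg h1, if_neg h1, Ordinal.mul_div_cancel _ (opow_ne_zero _ omega0_ne_zero),
      Ordinal.add_one_eq_succ, Ordinal.pred_succ]

lemma iotaF_surj {k : ℕ} (hk : 1 ≤ k) {δ : Ordinal} (hδ : δ < omega0 ^ omega0)
    (hCB : CB δ = ((k - 1 : ℕ) : Ordinal)) : ∃ γ < omega0 ^ omega0, δ = iotaF k γ := by
  by_cases h1 : k = 1
  · subst h1
    simp only [Nat.sub_self, Nat.cast_zero] at hCB
    rcases lt_or_ge δ omega0 with h | h
    · have hωW : omega0 ≤ omega0 ^ omega0 := by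
        have := opow_le_opow_right omega0_pos one_lt_omega0.le
        rwa [opow_one] at this
      exact ⟨δ, lt_of_lt_of_le h hωW, by unfold iotaF; rw [if_pos rfl, if_pos h]⟩
    · have hδ0 : δ ≠ 0 := by
        rintro rfl
        exact absurd h (not_le.2 omega0_pos)
      obtain ⟨γ, hγ⟩ := CB_exists hδ0
      rw [hCB, opow_zero, one_mul] at hγ
      have hγω : ¬ γ < omega0 := by
        intro hlt
        have : δ < omega0 := by rw [hγ]; exact isSuccLimit_omega0.add_one_lt hlt
        exact absurd h (not_le.2 this)
      refine ⟨γ, lt_of_le_of_lt (le_of_lt (lt_add_one γ)) (hγ ▸ hδ), ?_⟩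
      unfold iotaF
      rw [if_pos rfl, if_neg hγω, hγ]
  · have hδ0 : δ ≠ 0 := by
      rintro rfl
      rw [CB_zero] at hCB
      have : k - 1 ≠ 0 := by omega
      exact this (by exact_mod_cast hCB.symm)
    obtain ⟨γ, hγ⟩ := CB_exists hδ0
    rw [hCB] at hγ
    have hγW : γ < omega0 ^ omega0 := by
      refine lt_of_lt_of_le (lt_of_lt_of_le (lt_add_one γ) ?_) (hγ ▸ hδ.le)
      exact Ordinal.le_mul_right _ (opow_pos _ omega0_pos)
    exact ⟨γ, hγW, by unfold iotaF; rw [if_neg h1]; exact hγ⟩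


section K
variable {k : ℕ}

lemma box_iotaF_isMat {j : ℕ} {γ : Ordinal} (hj : j < k) (hγ : γ < omega0 ^ omega0) :
    IsMatBox k (box j (iotaF k γ)) :=
  ⟨j, hj, iotaF k γ, iotaF_lt_W hγ, CB_iotaF γ, rfl⟩

lemma isMat_rep (hk : 1 ≤ k) {M : Set Ordinal} (hM : IsMatBox k M) :
    ∃ j : ℕ, j < k ∧ ∃ γ : Ordinal, γ < omega0 ^ omega0 ∧ M = box j (iotaF k γ) := by
  obtain ⟨j, hj, δ, hδ, hCB, rfl⟩ := hM
  obtain ⟨γ, hγ, rfl⟩ := iotaF_surj hk hδ hCB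
  exact ⟨j, hj, γ, hγ, rfl⟩

lemma box_iotaF_singleton (hk1 : k = 1) {j : ℕ} (hj : j < k) {γ : Ordinal}
    (hγ : γ < omega0 ^ omega0) : box j (iotaF k γ) = {iotaF k γ} := by
  subst hk1
  interval_cases j
  have h := CB_iotaF (k := 1) γ
  simp only [Nat.sub_self, Nat.cast_zero] at h
  exact box_singleton (iotaF_lt_W hγ) h (by simp)

lemma iotaF_eq_of_ne (hk1 : k ≠ 1) (γ : Ordinal) :
    iotaF k γ = omega0 ^ ((k - 1 : ℕ) : Ordinal) * (γ + 1) := by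
  unfold iotaF; rw [if_neg hk1]

lemma box_iotaF_nonempty {j : ℕ} {γ : Ordinal} (hj : j < k) (hγ : γ < omega0 ^ omega0) :
    (box j (iotaF k γ)).Nonempty := by
  by_cases hk1 : k = 1
  · rw [box_iotaF_singleton hk1 hj hγ]; exact Set.singleton_nonempty _
  · rw [iotaF_eq_of_ne hk1]
    refine box_nonempty (Nat.cast_le.2 (by omega)) ?_
    rw [← iotaF_eq_of_ne hk1]
    exact iotaF_lt_W hγ

lemma sSup_box_iotaF {j : ℕ} {γ : Ordinal} (hj : j < k) (hγ : γ < omega0 ^ omega0) :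
    sSup (box j (iotaF k γ)) = iotaF k γ := by
  by_cases hk1 : k = 1
  · rw [box_iotaF_singleton hk1 hj hγ, csSup_singleton]
  · rw [iotaF_eq_of_ne hk1]
    refine box_sSup (Nat.cast_le.2 (by omega)) ?_
    rw [← iotaF_eq_of_ne hk1]
    exact iotaF_lt_W hγ

lemma rank_box_iotaF {j : ℕ} {γ : Ordinal} (hj : j < k) (hγ : γ < omega0 ^ omega0) :
    boxRank (box j (iotaF k γ)) = (j : Ordinal) :=
  box_rank (box_iotaF_nonempty hj hγ)

lemma sup_lt_inf_box_iotaF {j : ℕ} {γ γ' : Ordinal} (hj : j < k)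
    (hγγ' : γ < γ') (hγ' : γ' < omega0 ^ omega0) (hγ : γ < omega0 ^ omega0) :
    sSup (box j (iotaF k γ)) < sInf (box j (iotaF k γ')) := by
  by_cases hk1 : k = 1
  · rw [box_iotaF_singleton hk1 hj hγ, box_iotaF_singleton hk1 hj hγ',
      csSup_singleton, csInf_singleton]
    exact iotaF_strictMono hγγ'
  · rw [iotaF_eq_of_ne hk1, iotaF_eq_of_ne hk1]
    refine box_sup_lt_inf (Nat.cast_le.2 (by omega)) hγγ' ?_ ?_ <;>
      rw [← iotaF_eq_of_ne hk1]
    · exact iotaF_lt_W hγ'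
    · exact iotaF_lt_W hγ

lemma boxPrec_iff {j j' : ℕ} {γ γ' : Ordinal} (hj : j < k) (hj' : j' < k)
    (hγ : γ < omega0 ^ omega0) (hγ' : γ' < omega0 ^ omega0) :
    boxPrec (box j (iotaF k γ)) (box j' (iotaF k γ')) ↔
      (j < j' ∨ (j = j' ∧ γ < γ')) := by
  unfold boxPrec
  rw [rank_box_iotaF hj hγ, rank_box_iotaF hj' hγ']
  constructor
  · rintro (h | ⟨h1, h2⟩)
    · exact Or.inl (Nat.cast_lt.1 h)
    · have hjj : j = j' := Nat.cast_injective h1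
      subst hjj
      refine Or.inr ⟨rfl, ?_⟩
      rcases lt_trichotomy γ γ' with h | h | h
      · exact h
      · subst h
        exact absurd h2 (not_lt.2 (csInf_le_csSup (box_iotaF_nonempty hj hγ) (OrderBot.bddBelow _)
          box_bddAbove))
      · exfalso
        have h3 := sup_lt_inf_box_iotaF hj h hγ hγ'
        have i1 : sInf (box j (iotaF k γ')) ≤ sSup (box j (iotaF k γ')) :=
          csInf_le_csSup (box_iotaF_nonempty hj hγ') (OrderBot.bddBelow _) box_bddAbove
        have i2 : sInf (box j (iotaF k γ)) ≤ sSup (box j (iotaF k γ)) :=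
          csInf_le_csSup (box_iotaF_nonempty hj hγ) (OrderBot.bddBelow _) box_bddAbove
        exact lt_irrefl _ (((h2.trans_le i1).trans h3).trans_le i2)
  · rintro (h | ⟨rfl, h⟩)
    · exact Or.inl (Nat.cast_lt.2 h)
    · exact Or.inr ⟨rfl, sup_lt_inf_box_iotaF hj h hγ' hγ⟩

lemma lex_ord {j j' : ℕ} {γ γ' : Ordinal} (hγ : γ < omega0 ^ omega0)
    (hγ' : γ' < omega0 ^ omega0) :
    omega0 ^ omega0 * j + γ < omega0 ^ omega0 * j' + γ' ↔
      (j < j' ∨ (j = j' ∧ γ < γ')) := by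
  constructor
  · intro h
    rcases Nat.lt_trichotomy j j' with hj | hj | hj
    · exact Or.inl hj
    · subst hj
      exact Or.inr ⟨rfl, by rwa [add_lt_add_iff_left] at h⟩
    · exfalso
      have : omega0 ^ omega0 * j' + γ' < omega0 ^ omega0 * j + γ := by
        calc omega0 ^ omega0 * j' + γ' < omega0 ^ omega0 * j' + omega0 ^ omega0 :=
              add_lt_add_right hγ' _
        _ = omega0 ^ omega0 * (j' + 1) := by rw [mul_add_one]
        _ ≤ omega0 ^ omega0 * j :=
              (mul_le_mul_iff_right₀ (opow_pos _ omega0_pos)).2 (by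
                exact_mod_cast Nat.cast_le.2 (Nat.succ_le_of_lt hj))
        _ ≤ omega0 ^ omega0 * j + γ := le_self_add
      exact lt_irrefl _ (h.trans this)
  · rintro (h | ⟨rfl, h⟩)
    · calc omega0 ^ omega0 * j + γ < omega0 ^ omega0 * j + omega0 ^ omega0 :=
            add_lt_add_right hγ _
      _ = omega0 ^ omega0 * (j + 1) := by rw [mul_add_one]
      _ ≤ omega0 ^ omega0 * j' :=
            (mul_le_mul_iff_right₀ (opow_pos _ omega0_pos)).2 (by
              exact_mod_cast Nat.cast_le.2 (Nat.succ_le_of_lt h))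
      _ ≤ omega0 ^ omega0 * j' + γ' := le_self_add
    · exact add_lt_add_right h _

end K

section Lifts
universe u v

instance subrelIioIsWellOrder (o : Ordinal.{u}) :
    IsWellOrder (Subtype (Set.Iio o)) (Subrel ((· < ·) : Ordinal.{u} → Ordinal.{u} → Prop) (Set.Iio o)) :=
  inferInstanceAs (IsWellOrder (Subtype (fun x => x < o))
    (Subrel ((· < ·) : Ordinal.{u} → Ordinal.{u} → Prop) (fun x => x < o)))

lemma lift_omega0_opow_nat : ∀ n : ℕ,
    Ordinal.lift.{v} ((omega0 : Ordinal.{u}) ^ (n : Ordinal)) = omega0 ^ (n : Ordinal)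
  | 0 => by simp
  | (n+1) => by
    simp only [Nat.cast_succ]
    rw [opow_add, opow_add, opow_one, opow_one, lift_mul,
      lift_omega0_opow_nat n, lift_omega0]

lemma lift_omega0_opow_omega0 :
    Ordinal.lift.{v} ((omega0 : Ordinal.{u}) ^ (omega0 : Ordinal.{u})) = omega0 ^ omega0 := by
  apply le_antisymm
  · by_contra hlt
    push_neg at hlt
    obtain ⟨a, halt, ha⟩ := Ordinal.lt_lift_iff.1 hlt
    obtain ⟨c, hc, hac⟩ := (lt_opow_of_isSuccLimit omega0_ne_zero isSuccLimit_omega0).1 halt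
    obtain ⟨n, rfl⟩ := lt_omega0.1 hc
    have h1 : Ordinal.lift.{v} a < omega0 ^ (n : Ordinal) := by
      rw [← lift_omega0_opow_nat.{u,v} n]
      exact Ordinal.lift_lt.2 hac
    rw [ha] at h1
    exact absurd (h1.trans_le (opow_le_opow_right omega0_pos (nat_lt_omega0 n).le))
      (lt_irrefl _)
  · by_contra hlt
    push_neg at hlt
    obtain ⟨c, hc, hac⟩ := (lt_opow_of_isSuccLimit omega0_ne_zero isSuccLimit_omega0).1 hlt
    obtain ⟨n, rfl⟩ := lt_omega0.1 hc
    have h1 : Ordinal.lift.{v} ((omega0 : Ordinal.{u}) ^ (omega0 : Ordinal.{u}))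
        < omega0 ^ (n : Ordinal) := hac
    rw [← lift_omega0_opow_nat.{u,v} n, Ordinal.lift_lt] at h1
    exact absurd h1 (not_lt.2 (opow_le_opow_right omega0_pos (nat_lt_omega0 n).le))

lemma subrel_iio_iso (k : ℕ) :
    Nonempty (Subrel ((· < ·) : Ordinal.{u} → Ordinal.{u} → Prop)
        (Set.Iio (omega0 ^ omega0 * k)) ≃r
      Subrel ((· < ·) : Ordinal.{v} → Ordinal.{v} → Prop)
        (Set.Iio (omega0 ^ omega0 * k))) := by
  apply Ordinal.lift_type_eq.{u+1, v+1, 0}.1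
  have e1 : type (Subrel ((· < ·) : Ordinal.{u} → Ordinal.{u} → Prop)
      (Set.Iio (omega0 ^ omega0 * k))) = lift.{u+1} (omega0 ^ omega0 * k : Ordinal.{u}) :=
    type_lt_Iio _
  have e2 : type (Subrel ((· < ·) : Ordinal.{v} → Ordinal.{v} → Prop)
      (Set.Iio (omega0 ^ omega0 * k))) = lift.{v+1} (omega0 ^ omega0 * k : Ordinal.{v}) :=
    type_lt_Iio _
  rw [e1, e2, Ordinal.lift_lift, Ordinal.lift_lift, lift_mul, lift_mul,
    lift_natCast, lift_natCast]
  congr 1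
  have f1 : Ordinal.lift.{max (u+1) (v+1)} ((omega0 : Ordinal.{u}) ^ omega0)
      = Ordinal.lift.{max (u+1) (v+1)} (Ordinal.lift.{v} ((omega0 : Ordinal.{u}) ^ omega0)) :=
    (Ordinal.lift_lift.{u, v, max (u+1) (v+1)} _).symm
  have f2 : Ordinal.lift.{max (u+1) (v+1)} ((omega0 : Ordinal.{v}) ^ omega0)
      = Ordinal.lift.{max (u+1) (v+1)} (Ordinal.lift.{u} ((omega0 : Ordinal.{v}) ^ omega0)) :=
    (Ordinal.lift_lift.{v, u, max (u+1) (v+1)} _).symm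
  rw [f1, f2, lift_omega0_opow_omega0.{u,v}, lift_omega0_opow_omega0.{v,u}]
end Lifts

section Main
universe u

lemma main_iso (k : ℕ) (hk : 1 ≤ k) :
    ∃ _h : IsWellOrder {M : Set Ordinal.{u} // IsMatBox k M}
        (fun M N => boxPrec M.1 N.1),
      Nonempty ((fun M N : {M : Set Ordinal.{u} // IsMatBox k M} => boxPrec M.1 N.1) ≃r
        Subrel ((· < ·) : Ordinal.{u} → Ordinal.{u} → Prop)
          (Set.Iio (Ordinal.omega0 ^ Ordinal.omega0 * k))) := by
  have hW0 : (omega0 ^ omega0 : Ordinal) ≠ 0 := opow_ne_zero _ omega0_ne_zero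
  have key : ∀ M : {M : Set Ordinal // IsMatBox k M}, ∃ j : ℕ, j < k ∧
      ∃ γ : Ordinal, γ < omega0 ^ omega0 ∧ M.1 = box j (iotaF k γ) ∧
        omega0 ^ omega0 * boxRank M.1 + posF k (sSup M.1) = omega0 ^ omega0 * j + γ := by
    intro M
    obtain ⟨j, hj, γ, hγ, hM⟩ := isMat_rep hk M.2
    refine ⟨j, hj, γ, hγ, hM, ?_⟩
    rw [hM, rank_box_iotaF hj hγ, sSup_box_iotaF hj hγ, posF_iotaF]
  have bound : ∀ {j : ℕ}, j < k → ∀ {γ : Ordinal}, γ < omega0 ^ omega0 →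
      omega0 ^ omega0 * j + γ < omega0 ^ omega0 * k := by
    intro j hj γ hγ
    calc omega0 ^ omega0 * j + γ < omega0 ^ omega0 * j + omega0 ^ omega0 :=
          add_lt_add_right hγ _
    _ = omega0 ^ omega0 * (j + 1) := by rw [mul_add_one]
    _ ≤ omega0 ^ omega0 * k :=
          (mul_le_mul_iff_right₀ (opow_pos _ omega0_pos)).2 (by
            exact_mod_cast Nat.cast_le.2 (Nat.succ_le_of_lt hj))
  let F : {M : Set Ordinal // IsMatBox k M} →
      ↥(Set.Iio (Ordinal.omega0 ^ Ordinal.omega0 * k)) := fun M =>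
    ⟨omega0 ^ omega0 * boxRank M.1 + posF k (sSup M.1), by
      obtain ⟨j, hj, γ, hγ, _, he⟩ := key M
      rw [Set.mem_Iio, he]
      exact bound hj hγ⟩
  have hFlt : ∀ M N : {M : Set Ordinal // IsMatBox k M},
      boxPrec M.1 N.1 ↔ (F M : Ordinal) < (F N : Ordinal) := by
    intro M N
    obtain ⟨j, hj, γ, hγ, hM, he⟩ := key M
    obtain ⟨j', hj', γ', hγ', hN, he'⟩ := key N
    show boxPrec M.1 N.1 ↔ omega0 ^ omega0 * boxRank M.1 + posF k (sSup M.1) <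
      omega0 ^ omega0 * boxRank N.1 + posF k (sSup N.1)
    rw [he, he', hM, hN, boxPrec_iff hj hj' hγ hγ', lex_ord hγ hγ']
  have hFinj : Function.Injective F := by
    intro M N h
    obtain ⟨j, hj, γ, hγ, hM, he⟩ := key M
    obtain ⟨j', hj', γ', hγ', hN, he'⟩ := key N
    have hval : omega0 ^ omega0 * j + γ = omega0 ^ omega0 * j' + γ' := by
      rw [← he, ← he']
      exact congrArg Subtype.val h
    have h1 : ¬ (j < j' ∨ (j = j' ∧ γ < γ')) := by
      rw [← lex_ord hγ hγ', hval]; exact lt_irrefl _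
    have h2 : ¬ (j' < j ∨ (j' = j ∧ γ' < γ)) := by
      rw [← lex_ord hγ' hγ, hval]; exact lt_irrefl _
    push_neg at h1 h2
    have hjj : j = j' := by omega
    subst hjj
    have hγγ : γ = γ' := le_antisymm (h2.2 rfl) (h1.2 rfl)
    subst hγγ
    exact Subtype.ext (by rw [hM, hN])
  let emb : (fun M N : {M : Set Ordinal // IsMatBox k M} => boxPrec M.1 N.1) ↪r
      Subrel ((· < ·) : Ordinal → Ordinal → Prop)
        (Set.Iio (Ordinal.omega0 ^ Ordinal.omega0 * k)) :=
    ⟨⟨F, hFinj⟩, by intro M N; exact (hFlt M N).symm⟩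
  have hsurj : Function.Surjective emb := by
    rintro ⟨o, ho⟩
    change o < _ at ho
    have hdiv : o / omega0 ^ omega0 < (k : Ordinal) := (Ordinal.div_lt hW0).2 ho
    obtain ⟨n, hn⟩ := lt_omega0.1 (hdiv.trans (nat_lt_omega0 k))
    have hnk : n < k := Nat.cast_lt.1 (hn ▸ hdiv)
    have hγ : o % omega0 ^ omega0 < omega0 ^ omega0 := Ordinal.mod_lt o hW0
    refine ⟨⟨box n (iotaF k (o % omega0 ^ omega0)), box_iotaF_isMat hnk hγ⟩, ?_⟩
    apply Subtype.ext
    show omega0 ^ omega0 * boxRank (box n (iotaF k (o % omega0 ^ omega0))) +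
      posF k (sSup (box n (iotaF k (o % omega0 ^ omega0)))) = o
    rw [rank_box_iotaF hnk hγ, sSup_box_iotaF hnk hγ, posF_iotaF, ← hn,
      Ordinal.div_add_mod]
  exact ⟨emb.isWellOrder, ⟨RelIso.ofSurjective emb hsurj⟩⟩
end Main

/-- For `k ≥ 1`, the relation `≺` is a strict well-order on the collection of
matryoshka boxes of degree `k`, of order type `ω^ω · k`. -/
theorem stmt_18 (k : ℕ) (hk : 1 ≤ k) :
    ∃ _h : IsWellOrder {M : Set Ordinal // IsMatBox k M}
        (fun M N => boxPrec M.1 N.1),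
      Nonempty ((fun M N : {M : Set Ordinal // IsMatBox k M} => boxPrec M.1 N.1) ≃r
        Subrel ((· < ·) : Ordinal → Ordinal → Prop)
          (Set.Iio (Ordinal.omega0 ^ Ordinal.omega0 * k))) := by
  obtain ⟨h1, -⟩ := main_iso.{u_1} k hk
  obtain ⟨-, ⟨iso⟩⟩ := main_iso.{u_3} k hk
  obtain ⟨bridge⟩ := subrel_iio_iso.{u_3, u_2} k
  exact ⟨h1, ⟨iso.trans bridge⟩⟩
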